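/- Let a be a positive real algebraic number, let P ∈ ℚ[x] be its (monic) minimal polynomial over ℚ, and let Q_a ∈ ℤ[x] be the primitive integer polynomial obtained by clearing denominators of P (so P = c·Q_a with c⁻¹ the least common multiple of the denominators of the coefficients of P, and the coefficients of Q_a have greatest common divisor 1). Then the kernel of the evaluation ring homomorphism ℤ[x,x⁻¹] → ℝ sending x to a equals the ideal of ℤ[x,x⁻¹] generated by Q_a; consequently the subring ℤ[a,a⁻¹] of ℝ (whose underlying additive group is B_a) is isomorphic as a ring to ℤ[x,x⁻¹]/(Q_a). -/

import Mathlib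

noncomputable section

/-- `B a` is the additive subgroup of `ℝ` generated by the integer powers of `a`. -/
def B (a : ℝ) : AddSubgroup ℝ := AddSubgroup.closure {x : ℝ | ∃ n : ℤ, x = a ^ n}

/-- Evaluation of Laurent polynomials over `ℤ` at the nonzero real number `a`
(the ring homomorphism `ℤ[x,x⁻¹] → ℝ`, `x ↦ a`). -/
def laurentEval (a : ℝ) (ha : a ≠ 0) : LaurentPolynomial ℤ →ₐ[ℤ] ℝ :=
  AddMonoidAlgebra.lift ℤ ℝ ℤ
    ((Units.coeHom ℝ).comp (zpowersHom ℝˣ (Units.mk0 a ha)))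

lemma laurentEval_T (a : ℝ) (ha : a ≠ 0) (n : ℤ) :
    laurentEval a ha (LaurentPolynomial.T n) = a ^ n := by
  rw [laurentEval, LaurentPolynomial.T, AddMonoidAlgebra.lift_single]
  simp [Units.val_zpow_eq_zpow_val]

lemma laurentEval_toLaurent (a : ℝ) (ha : a ≠ 0) (p : Polynomial ℤ) :
    laurentEval a ha (Polynomial.toLaurent p) = Polynomial.aeval a p := by
  have : (laurentEval a ha).comp Polynomial.toLaurentAlg = Polynomial.aeval a := by
    apply Polynomial.algHom_ext
    simp only [AlgHom.comp_apply, Polynomial.toLaurentAlg_apply, Polynomial.toLaurent_X,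
      laurentEval_T, zpow_one, Polynomial.aeval_X]
  calc laurentEval a ha (Polynomial.toLaurent p)
      = ((laurentEval a ha).comp Polynomial.toLaurentAlg) p := rfl
    _ = Polynomial.aeval a p := by rw [this]

lemma zpow_mem_closure (a : ℝ) (ha : a ≠ 0) (n : ℤ) :
    a ^ n ∈ Subring.closure ({a, a⁻¹} : Set ℝ) := by
  have haM : a ∈ Subring.closure ({a, a⁻¹} : Set ℝ) :=
    Subring.subset_closure (Set.mem_insert _ _)
  have hiM : a⁻¹ ∈ Subring.closure ({a, a⁻¹} : Set ℝ) :=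
    Subring.subset_closure (Set.mem_insert_of_mem _ rfl)
  rcases n with k | k
  · rw [Int.ofNat_eq_natCast, zpow_natCast]; exact pow_mem haM k
  · rw [zpow_negSucc, ← inv_pow]; exact pow_mem hiM (k + 1)

/-- for a positive algebraic real `a` with monic minimal polynomial `P`
over `ℚ` and `Q` the primitive integer polynomial with `P = c • Q`, the kernel of the
evaluation `ℤ[x,x⁻¹] → ℝ` at `a` is the ideal generated by `Q`; consequently
`ℤ[a,a⁻¹] ≅ ℤ[x,x⁻¹]/(Q)` as rings. -/
theorem laurent_ker_eq_span_and_iso (a : ℝ) (ha : 0 < a) (halg : IsAlgebraic ℚ a)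
    (Q : Polynomial ℤ) (hQprim : Q.IsPrimitive)
    (c : ℚ) (hc : c ≠ 0) (hPQ : minpoly ℚ a = c • Q.map (Int.castRingHom ℚ)) :
    RingHom.ker ((laurentEval a ha.ne') : LaurentPolynomial ℤ →+* ℝ)
        = Ideal.span {Polynomial.toLaurent Q} ∧
    Nonempty ((LaurentPolynomial ℤ ⧸ Ideal.span {Polynomial.toLaurent Q}) ≃+*
      Subring.closure ({a, a⁻¹} : Set ℝ)) := by
  have ha' : a ≠ 0 := ha.ne'
  have hint : (algebraMap ℤ ℚ) = Int.castRingHom ℚ := rfl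
  -- `aeval a Q = 0`
  have haevalQ : Polynomial.aeval a Q = 0 := by
    have h0 : Polynomial.aeval a (minpoly ℚ a) = 0 := minpoly.aeval ℚ a
    rw [hPQ, Polynomial.smul_eq_C_mul, map_mul] at h0
    have : Polynomial.aeval a (Q.map (Int.castRingHom ℚ)) = 0 := by
      have hcne : (Polynomial.aeval a (Polynomial.C c) : ℝ) ≠ 0 := by
        simpa using (Rat.cast_ne_zero (α := ℝ)).mpr hc
      exact (mul_eq_zero.mp h0).resolve_left hcne
    rwa [← hint, Polynomial.aeval_map_algebraMap] at this
  -- kernel = span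
  have hker : RingHom.ker ((laurentEval a ha.ne') : LaurentPolynomial ℤ →+* ℝ)
      = Ideal.span {Polynomial.toLaurent Q} := by
    apply le_antisymm
    · intro f hf
      have hfa : laurentEval a ha' f = 0 := hf
      obtain ⟨n, p, hp⟩ := LaurentPolynomial.exists_T_pow f
      have hfval : Polynomial.aeval a p = 0 := by
        rw [← laurentEval_toLaurent a ha', hp, map_mul, hfa, zero_mul]
      rw [Ideal.mem_span_singleton]
      have hfeq : f = Polynomial.toLaurent p * LaurentPolynomial.T (-(n : ℤ)) := by
        rw [hp, LaurentPolynomial.mul_T_assoc, add_neg_cancel, LaurentPolynomial.T_zero,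
          mul_one]
      by_cases hp0 : p = 0
      · rw [hfeq, hp0, map_zero, zero_mul]; exact dvd_zero _
      -- `minpoly ∣ pℚ`, hence `Qℚ ∣ pℚ`
      have hmin : minpoly ℚ a ∣ p.map (Int.castRingHom ℚ) := by
        apply minpoly.dvd
        rwa [← hint, Polynomial.aeval_map_algebraMap]
      have hQQ : Q.map (Int.castRingHom ℚ) ∣ p.map (Int.castRingHom ℚ) := by
        refine dvd_trans ⟨Polynomial.C c, ?_⟩ hmin
        rw [hPQ, Polynomial.smul_eq_C_mul, mul_comm]
      -- pass to primitive part
      have hcontent : (p.content : ℚ) ≠ 0 := by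
        exact_mod_cast (Polynomial.content_eq_zero_iff.not.mpr hp0)
      have hQpp : Q.map (Int.castRingHom ℚ) ∣ p.primPart.map (Int.castRingHom ℚ) := by
        have hpm : p.map (Int.castRingHom ℚ)
            = Polynomial.C (p.content : ℚ) * p.primPart.map (Int.castRingHom ℚ) := by
          conv_lhs => rw [p.eq_C_content_mul_primPart]
          rw [Polynomial.map_mul, Polynomial.map_C]
          norm_num
        have hu : IsUnit (Polynomial.C (p.content : ℚ)) :=
          Polynomial.isUnit_C.mpr (isUnit_iff_ne_zero.mpr hcontent)
        rw [hpm] at hQQ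
        exact hu.dvd_mul_left.mp hQQ
      have hQp : Q ∣ p := by
        refine dvd_trans ?_ p.primPart_dvd
        exact hQprim.dvd_of_fraction_map_dvd_fraction_map (K := ℚ)
          (by rwa [hint])
      rw [hfeq]
      exact Dvd.dvd.mul_right (map_dvd Polynomial.toLaurent hQp) _
    · rw [Ideal.span_le, Set.singleton_subset_iff]
      show laurentEval a ha' (Polynomial.toLaurent Q) = 0
      rw [laurentEval_toLaurent, haevalQ]
  refine ⟨hker, ?_⟩
  -- range = closure
  have hrange : ((laurentEval a ha.ne') : LaurentPolynomial ℤ →+* ℝ).range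
      = Subring.closure ({a, a⁻¹} : Set ℝ) := by
    apply le_antisymm
    · rintro x ⟨f, rfl⟩
      induction f using LaurentPolynomial.induction_on' with
      | add p q hp hq => rw [map_add]; exact add_mem hp hq
      | C_mul_T n m =>
        rw [map_mul]
        refine mul_mem ?_ ?_
        · show (laurentEval a ha' (LaurentPolynomial.C m)) ∈ _
          rw [LaurentPolynomial.C_eq_algebraMap, AlgHom.commutes]
          simpa using intCast_mem (Subring.closure ({a, a⁻¹} : Set ℝ)) m
        · show (laurentEval a ha' (LaurentPolynomial.T n)) ∈ _
          rw [laurentEval_T]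
          exact zpow_mem_closure a ha' n
    · rw [Subring.closure_le]
      rintro x (rfl | rfl)
      · exact ⟨LaurentPolynomial.T 1, by rw [RingHom.coe_coe, laurentEval_T, zpow_one]⟩
      · exact ⟨LaurentPolynomial.T (-1), by rw [RingHom.coe_coe, laurentEval_T, zpow_neg_one]⟩
  exact ⟨(Ideal.quotEquivOfEq hker.symm).trans
    ((RingHom.quotientKerEquivRange _).trans (RingEquiv.subringCongr hrange))⟩
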